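/- Widder–Taylor formula: Let f, u₀, u₁, …, uₙ ∈ C^{n+1}([a,b]) with all Wronskians W₀(x), W₁(x), …, Wₙ(x) > 0 on [a,b]. Then for all x, t ∈ [a,b], f(x) = f(t)·u₀(x)/u₀(t) + Σ_{i=1}^{n} L_i f(t) g_i(x,t) + ∫ₜˣ gₙ(x,s) L_{n+1} f(s) ds, where L_i f(x) = W[u₀,…,u_{i-1},f](x)/W_{i-1}(x) is the Widder derivative and g_i(x,t) is the associated kernel (determinant with last row (u₀(x),…,u_i(x)) divided by W_i(t)). -/

import Mathlib

open intervalIntegral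

/-- The Wronskian `W[u₀,…,uₙ](x)` of the functions `u 0, …, u n`. -/
noncomputable def wronskian (n : ℕ) (u : ℕ → ℝ → ℝ) (x : ℝ) : ℝ :=
  Matrix.det (Matrix.of fun j k : Fin (n + 1) => iteratedDeriv (j : ℕ) (u (k : ℕ)) x)

/-- The Widder derivative `L_i f(x) = W[u₀,…,u_{i-1},f](x) / W_{i-1}(x)`, with `L_0 f = f`. -/
noncomputable def widderL (i : ℕ) (u : ℕ → ℝ → ℝ) (f : ℝ → ℝ) (x : ℝ) : ℝ :=
  match i with
  | 0 => f x
  | m + 1 =>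
      Matrix.det (Matrix.of fun j k : Fin (m + 2) =>
        if (k : ℕ) = m + 1 then iteratedDeriv (j : ℕ) f x
        else iteratedDeriv (j : ℕ) (u (k : ℕ)) x) / wronskian m u x

/-- The Widder kernel `g_i(x,t)`: for `i ≥ 1` it is the determinant of the matrix whose
rows `j = 0,…,i-1` are `(u₀^{(j)}(t),…,u_i^{(j)}(t))` and whose last row is
`(u₀(x),…,u_i(x))`, divided by `W_i(t)`; and `g_0(x,t) = u₀(x)/u₀(t)`. -/
noncomputable def widderG (i : ℕ) (u : ℕ → ℝ → ℝ) (x t : ℝ) : ℝ :=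
  match i with
  | 0 => u 0 x / u 0 t
  | m + 1 =>
      Matrix.det (Matrix.of fun j k : Fin (m + 2) =>
        if (j : ℕ) = m + 1 then u (k : ℕ) x
        else iteratedDeriv (j : ℕ) (u (k : ℕ)) t) / wronskian (m + 1) u t


open Matrix

namespace WidderAux

variable {N : ℕ}


lemma my_hasDerivAt_det {m : ℕ} (M : ℝ → Matrix (Fin m) (Fin m) ℝ)
    (M' : Matrix (Fin m) (Fin m) ℝ) (x : ℝ)
    (h : ∀ i j, HasDerivAt (fun t => M t i j) (M' i j) x) :
    HasDerivAt (fun t => (M t).det) (∑ r, ((M x).updateRow r (M' r)).det) x := by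
  have hprod : ∀ σ : Equiv.Perm (Fin m), HasDerivAt (fun t => ∏ i, M t (σ i) i)
      (∑ j, (∏ i ∈ Finset.univ.erase j, M x (σ i) i) • M' (σ j) j) x :=
    fun σ => HasDerivAt.fun_finsetProd (fun j _ => h (σ j) j)
  have hmain := HasDerivAt.fun_sum (u := (Finset.univ : Finset (Equiv.Perm (Fin m))))
    (A := fun (σ : Equiv.Perm (Fin m)) t => ((Equiv.Perm.sign σ : ℤ) : ℝ) * ∏ i, M t (σ i) i)
    (A' := fun σ => ((Equiv.Perm.sign σ : ℤ) : ℝ) *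
      ∑ j, (∏ i ∈ Finset.univ.erase j, M x (σ i) i) • M' (σ j) j)
    (fun σ _ => ((hprod σ).const_mul ((Equiv.Perm.sign σ : ℤ) : ℝ)))
  have h1 : (fun t => ∑ σ ∈ Finset.univ, ((Equiv.Perm.sign σ : ℤ) : ℝ) * ∏ i, M t (σ i) i)
      = fun t => (M t).det := by
    funext t; rw [Matrix.det_apply']
  rw [h1] at hmain
  refine hmain.congr_deriv (Eq.symm ?_)
  rw [Finset.sum_congr rfl (fun r _ => Matrix.det_apply' _)]
  rw [Finset.sum_comm]
  refine Finset.sum_congr rfl (fun σ _ => ?_)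
  simp only [Finset.mul_sum]
  rw [← Equiv.sum_comp σ (fun r => ((Equiv.Perm.sign σ : ℤ) : ℝ) *
      ∏ i, ((M x).updateRow r (M' r)) (σ i) i)]
  refine Finset.sum_congr rfl (fun j _ => ?_)
  congr 1
  have : ∀ i : Fin m, ((M x).updateRow (σ j) (M' (σ j))) (σ i) i
      = if i = j then M' (σ j) i else M x (σ i) i := by
    intro i
    rw [Matrix.updateRow_apply]
    simp [σ.injective.eq_iff]
  rw [Finset.prod_congr rfl (fun i _ => this i)]
  rw [← Finset.mul_prod_erase _ _ (Finset.mem_univ j)]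
  rw [if_pos rfl]
  rw [Finset.prod_congr rfl (fun i hi => if_neg (Finset.ne_of_mem_erase hi))]
  rw [smul_eq_mul]; ring




variable {N : ℕ}

/-- determinant of the matrix with rows `S 0, …, S (N-1), a, b`. -/
noncomputable def Dd (S : Fin N → (Fin (N+2) → ℝ)) (a b : Fin (N+2) → ℝ) : ℝ :=
  Matrix.det (Matrix.of (Fin.snoc (Fin.snoc S a) b))

lemma Dd_swap (S : Fin N → (Fin (N+2) → ℝ)) (a b : Fin (N+2) → ℝ) :
    Dd S a b = - Dd S b a := by
  have hne : ((Fin.last N).castSucc : Fin (N+2)) ≠ Fin.last (N+1) := by simp [Fin.ext_iff]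
  have key : (Fin.snoc (Fin.snoc S b) a : Fin (N+2) → (Fin (N+2) → ℝ)) =
      (Fin.snoc (Fin.snoc S a) b : Fin (N+2) → (Fin (N+2) → ℝ)) ∘
        (Equiv.swap ((Fin.last N).castSucc) (Fin.last (N+1))) := by
    funext i
    rcases eq_or_ne i ((Fin.last N).castSucc) with rfl | h1
    · simp only [Function.comp_apply, Equiv.swap_apply_left, Fin.snoc_castSucc, Fin.snoc_last]
    rcases eq_or_ne i (Fin.last (N+1)) with rfl | h2
    · simp only [Function.comp_apply, Equiv.swap_apply_right, Fin.snoc_castSucc, Fin.snoc_last]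
    · have hi : (i:ℕ) < N := by
        have h1' : (i:ℕ) ≠ N := fun h => h1 (Fin.ext (by simpa using h))
        have h2' : (i:ℕ) ≠ N+1 := fun h => h2 (Fin.ext (by simpa using h))
        omega
      have : i = ((⟨(i:ℕ), hi⟩ : Fin N).castSucc).castSucc := by simp [Fin.ext_iff]
      rw [this]
      simp only [Function.comp_apply, Equiv.swap_apply_of_ne_of_ne (this ▸ h1) (this ▸ h2),
        Fin.snoc_castSucc]
  have hsw := Matrix.detRowAlternating.map_swap
    (v := (Fin.snoc (Fin.snoc S a) b : Fin (N+2) → (Fin (N+2) → ℝ))) hne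
  rw [← key] at hsw
  have h2 : Dd S b a = - Dd S a b := hsw
  rw [h2]; ring

lemma snoc_eq_update {β : Type*} {n : ℕ} (p : Fin n → β) (x z : β) :
    (Fin.snoc p z : Fin (n+1) → β) = Function.update (Fin.snoc p x : Fin (n+1) → β) (Fin.last n) z := by
  funext i
  rcases eq_or_ne i (Fin.last n) with rfl | h
  · simp
  · have hlt : (i:ℕ) < n := by
      have := i.isLt
      have : (i:ℕ) ≠ n := fun hh => h (Fin.ext (by simpa using hh))
      omega
    have : i = (⟨(i:ℕ), hlt⟩ : Fin n).castSucc := by simp [Fin.ext_iff]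
    rw [Function.update_of_ne h, this, Fin.snoc_castSucc, Fin.snoc_castSucc]

lemma Dd_diag (S : Fin N → (Fin (N+2) → ℝ)) (a : Fin (N+2) → ℝ) :
    Dd S a a = 0 := by
  show Matrix.detRowAlternating (Fin.snoc (Fin.snoc S a) a : Fin (N+2) → (Fin (N+2) → ℝ)) = 0
  apply Matrix.detRowAlternating.map_eq_zero_of_eq _
    (i := (Fin.last N).castSucc) (j := Fin.last (N+1))
  · rw [Fin.snoc_castSucc, Fin.snoc_last, Fin.snoc_last]
  · simp [Fin.ext_iff]

/-- `Dd S a ·` as a linear map. -/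
noncomputable def DdRight (S : Fin N → (Fin (N+2) → ℝ)) (a : Fin (N+2) → ℝ) :
    (Fin (N+2) → ℝ) →ₗ[ℝ] ℝ where
  toFun b := Dd S a b
  map_add' y z := by
    show Matrix.detRowAlternating (Fin.snoc (Fin.snoc S a) (y+z) : Fin (N+2) → (Fin (N+2) → ℝ))
      = Matrix.detRowAlternating (Fin.snoc (Fin.snoc S a) y : Fin (N+2) → (Fin (N+2) → ℝ))
      + Matrix.detRowAlternating (Fin.snoc (Fin.snoc S a) z : Fin (N+2) → (Fin (N+2) → ℝ))
    rw [snoc_eq_update (Fin.snoc S a) 0 (y + z), snoc_eq_update (Fin.snoc S a) 0 y,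
      snoc_eq_update (Fin.snoc S a) 0 z]
    exact Matrix.detRowAlternating.map_update_add _ _ y z
  map_smul' r y := by
    show Matrix.detRowAlternating (Fin.snoc (Fin.snoc S a) (r • y) : Fin (N+2) → (Fin (N+2) → ℝ))
      = r • Matrix.detRowAlternating (Fin.snoc (Fin.snoc S a) y : Fin (N+2) → (Fin (N+2) → ℝ))
    rw [snoc_eq_update (Fin.snoc S a) 0 (r • y), snoc_eq_update (Fin.snoc S a) 0 y]
    exact Matrix.detRowAlternating.map_update_smul _ _ r y

lemma DdRight_apply (S : Fin N → (Fin (N+2) → ℝ)) (a b : Fin (N+2) → ℝ) :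
    DdRight S a b = Dd S a b := rfl

lemma Dd_row_right (S : Fin N → (Fin (N+2) → ℝ)) (a : Fin (N+2) → ℝ) (i : Fin N) :
    Dd S a (S i) = 0 := by
  show Matrix.detRowAlternating
    (Fin.snoc (Fin.snoc S a) (S i) : Fin (N+2) → (Fin (N+2) → ℝ)) = 0
  apply Matrix.detRowAlternating.map_eq_zero_of_eq _
    (i := (i.castSucc).castSucc) (j := Fin.last (N+1))
  · rw [Fin.snoc_castSucc, Fin.snoc_castSucc, Fin.snoc_last]
  · simp only [ne_eq, Fin.ext_iff, Fin.coe_castSucc, Fin.val_last]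
    omega

lemma plucker (S : Fin N → (Fin (N+2) → ℝ)) (v0 v1 v2 v3 : Fin (N+2) → ℝ) :
    Dd S v1 v2 * Dd S v0 v3 - Dd S v0 v2 * Dd S v1 v3 + Dd S v0 v1 * Dd S v2 v3 = 0 := by
  classical
  set vv : Fin 4 → (Fin (N+2) → ℝ) := ![v0, v1, v2, v3] with hvv
  have hdep : ¬ LinearIndependent ℝ (Sum.elim S vv) := by
    intro hli
    have hcard := hli.fintype_card_le_finrank
    rw [Module.finrank_fin_fun] at hcard
    simp only [Fintype.card_sum, Fintype.card_fin] at hcard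
    omega
  rw [Fintype.not_linearIndependent_iff] at hdep
  obtain ⟨g, hrel, i0, hi0⟩ := hdep
  set c : Fin 4 → ℝ := fun j => g (Sum.inr j) with hc
  set aa : Fin N → ℝ := fun i => g (Sum.inl i) with haa
  by_cases hcz : ∀ j, c j = 0
  · -- S is linearly dependent: all determinants vanish
    have hS : ¬ LinearIndependent ℝ S := by
      rw [Fintype.not_linearIndependent_iff]
      refine ⟨aa, ?_, ?_⟩
      · have hsplit := hrel
        rw [Fintype.sum_sum_type] at hsplit
        have h4 : ∑ j : Fin 4, g (Sum.inr j) • (Sum.elim S vv) (Sum.inr j) = 0 := by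
          apply Finset.sum_eq_zero; intro j _
          rw [show g (Sum.inr j) = 0 from hcz j, zero_smul]
        rw [h4, add_zero] at hsplit
        simpa using hsplit
      · rcases i0 with i | j
        · exact ⟨i, hi0⟩
        · exact absurd (hcz j) hi0
    have hz : ∀ p q : Fin (N+2) → ℝ, Dd S p q = 0 := by
      intro p q
      show Matrix.detRowAlternating
        (Fin.snoc (Fin.snoc S p) q : Fin (N+2) → (Fin (N+2) → ℝ)) = 0
      apply AlternatingMap.map_linearDependent
      intro hli
      apply hS
      have hcomp := hli.comp (fun i : Fin N => ((i.castSucc).castSucc : Fin (N+2)))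
        (fun i j hij => by simpa [Fin.ext_iff] using hij)
      have heq : ((Fin.snoc (Fin.snoc S p) q : Fin (N+2) → (Fin (N+2) → ℝ)) ∘
          fun i : Fin N => ((i.castSucc).castSucc : Fin (N+2))) = S := by
        funext i
        show (Fin.snoc (Fin.snoc S p) q : Fin (N+2) → (Fin (N+2) → ℝ)) (i.castSucc.castSucc) = S i
        rw [Fin.snoc_castSucc, Fin.snoc_castSucc]
      rwa [heq] at hcomp
    simp [hz]
  · push_neg at hcz
    obtain ⟨j0, hj0⟩ := hcz
    have H : ∀ p, c 0 * Dd S p v0 + c 1 * Dd S p v1 + c 2 * Dd S p v2 + c 3 * Dd S p v3 = 0 := by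
      intro p
      have h0 : DdRight S p (∑ i : Fin N ⊕ Fin 4, g i • Sum.elim S vv i) = 0 := by
        rw [hrel]; exact map_zero _
      rw [map_sum, Fintype.sum_sum_type] at h0
      have hzl : ∑ i : Fin N, DdRight S p (g (Sum.inl i) • (Sum.elim S vv) (Sum.inl i)) = 0 := by
        apply Finset.sum_eq_zero; intro i _
        rw [LinearMap.map_smul, DdRight_apply]
        simp only [Sum.elim_inl]
        rw [Dd_row_right, smul_zero]
      rw [hzl, zero_add, Fin.sum_univ_four] at h0
      simp only [Sum.elim_inr, LinearMap.map_smul, DdRight_apply, smul_eq_mul] at h0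
      simpa [hvv, hc] using h0
    have h0 := H v0
    have h1 := H v1
    have h2 := H v2
    have h3 := H v3
    rw [Dd_diag] at h0
    rw [Dd_swap S v1 v0, Dd_diag] at h1
    rw [Dd_swap S v2 v0, Dd_swap S v2 v1, Dd_diag] at h2
    rw [Dd_swap S v3 v0, Dd_swap S v3 v1, Dd_swap S v3 v2, Dd_diag] at h3
    fin_cases j0
    · apply mul_left_cancel₀ (show c 0 ≠ 0 from hj0)
      rw [mul_zero]
      linear_combination (-(Dd S v1 v2))*h3 + (Dd S v1 v3)*h2 - (Dd S v2 v3)*h1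
    · apply mul_left_cancel₀ (show c 1 ≠ 0 from hj0)
      rw [mul_zero]
      linear_combination (-(Dd S v0 v3))*h2 + (Dd S v0 v2)*h3 + (Dd S v2 v3)*h0
    · apply mul_left_cancel₀ (show c 2 ≠ 0 from hj0)
      rw [mul_zero]
      linear_combination (Dd S v0 v3)*h1 - (Dd S v1 v3)*h0 - (Dd S v0 v1)*h3
    · apply mul_left_cancel₀ (show c 3 ≠ 0 from hj0)
      rw [mul_zero]
      linear_combination (Dd S v1 v2)*h0 - (Dd S v0 v2)*h1 + (Dd S v0 v1)*h2








lemma snoc1_apply {β : Type*} {n : ℕ} (S : Fin n → β) (a : β) (i : Fin (n+1)) :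
    (Fin.snoc S a : Fin (n+1) → β) i = if h : (i:ℕ) < n then S ⟨(i:ℕ), h⟩ else a := by
  rcases lt_or_ge (i:ℕ) n with h | h
  · rw [dif_pos h]
    conv_lhs => rw [← Fin.castSucc_castLT i h]
    rw [Fin.snoc_castSucc]
    rfl
  · rw [dif_neg (by omega)]
    have : i = Fin.last n := by
      have := i.isLt; apply Fin.ext; simp only [Fin.val_last]; omega
    rw [this, Fin.snoc_last]

lemma snoc2_apply (S : Fin N → (Fin (N+2) → ℝ)) (a b : Fin (N+2) → ℝ) (i : Fin (N+2)) :
    (Fin.snoc (Fin.snoc S a) b : Fin (N+2) → Fin (N+2) → ℝ) i =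
      if h : (i:ℕ) < N then S ⟨(i:ℕ), h⟩ else if (i:ℕ) = N then a else b := by
  rw [snoc1_apply]
  rcases lt_or_ge (i:ℕ) (N+1) with h | h
  · rw [dif_pos h, snoc1_apply]
    rcases lt_or_ge (i:ℕ) N with h2 | h2
    · rw [dif_pos (show ((⟨(i:ℕ), h⟩ : Fin (N+1)):ℕ) < N from h2), dif_pos h2]
    · rw [dif_neg (show ¬ ((⟨(i:ℕ), h⟩ : Fin (N+1)):ℕ) < N by simp only [Fin.val_mk]; omega),
        dif_neg (by omega), if_pos (by omega)]
  · rw [dif_neg (by omega), dif_neg (by omega), if_neg (by omega)]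

lemma Dd_congr (S : Fin N → (Fin (N+2) → ℝ)) (a b : Fin (N+2) → ℝ)
    (M : Fin (N+2) → Fin (N+2) → ℝ)
    (h : ∀ (i : Fin (N+2)) (k : Fin (N+2)),
      (if hi : (i:ℕ) < N then S ⟨(i:ℕ), hi⟩ k else if (i:ℕ) = N then a k else b k) = M i k) :
    Dd S a b = Matrix.det (Matrix.of M) := by
  unfold Dd
  congr 1
  funext i k
  show (Fin.snoc (Fin.snoc S a) b : Fin (N+2) → Fin (N+2) → ℝ) i k = M i k
  rw [snoc2_apply]
  simp only [dite_apply, ite_apply]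
  exact h i k

lemma det_snoc_unit {m : ℕ} (T : Fin (m+1) → Fin (m+2) → ℝ) (c : Fin (m+2)) :
    Matrix.det (Matrix.of (Fin.snoc T (fun k => if k = c then (1:ℝ) else 0) :
        Fin (m+2) → Fin (m+2) → ℝ)) =
    (-1:ℝ)^((m+1) + (c:ℕ)) *
      Matrix.det (Matrix.of fun (i j : Fin (m+1)) => T i (c.succAbove j)) := by
  rw [Matrix.det_succ_row _ (Fin.last (m+1))]
  rw [Finset.sum_eq_single c]
  · have h3 : (Matrix.of (Fin.snoc T (fun k => if k = c then (1:ℝ) else 0) :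
        Fin (m+2) → Fin (m+2) → ℝ)) (Fin.last (m+1)) c = 1 := by
      show (Fin.snoc T _ : Fin (m+2) → Fin (m+2) → ℝ) (Fin.last (m+1)) c = 1
      rw [Fin.snoc_last, if_pos rfl]
    rw [h3, mul_one]
    congr 1
    congr 1
    funext i j
    show (Fin.snoc T _ : Fin (m+2) → Fin (m+2) → ℝ)
      ((Fin.last (m+1)).succAbove i) (c.succAbove j) = T i (c.succAbove j)
    rw [Fin.succAbove_last, Fin.snoc_castSucc]
  · intro b _ hb
    have h3 : (Matrix.of (Fin.snoc T (fun k => if k = c then (1:ℝ) else 0) :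
        Fin (m+2) → Fin (m+2) → ℝ)) (Fin.last (m+1)) b = 0 := by
      show (Fin.snoc T _ : Fin (m+2) → Fin (m+2) → ℝ) (Fin.last (m+1)) b = 0
      rw [Fin.snoc_last, if_neg hb]
    rw [h3, mul_zero, zero_mul]
  · intro hc
    exact absurd (Finset.mem_univ c) hc



/-- bumped wronskian: derivative of `wronskian n u`. -/
noncomputable def Wb (n : ℕ) (u : ℕ → ℝ → ℝ) (x : ℝ) : ℝ :=
  Matrix.det (Matrix.of fun j k : Fin (n+1) =>
    if (j:ℕ) = n then iteratedDeriv (n+1) (u (k:ℕ)) x else iteratedDeriv (j:ℕ) (u (k:ℕ)) x)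

/-- numerator of `widderL (m+1)`. -/
noncomputable def An (m : ℕ) (u : ℕ → ℝ → ℝ) (f : ℝ → ℝ) (x : ℝ) : ℝ :=
  Matrix.det (Matrix.of fun j k : Fin (m+2) =>
    if (k:ℕ) = m+1 then iteratedDeriv (j:ℕ) f x else iteratedDeriv (j:ℕ) (u (k:ℕ)) x)

/-- bumped version: derivative of `An m u f`. -/
noncomputable def Anb (m : ℕ) (u : ℕ → ℝ → ℝ) (f : ℝ → ℝ) (x : ℝ) : ℝ :=
  Matrix.det (Matrix.of fun j k : Fin (m+2) =>
    if (k:ℕ) = m+1 then iteratedDeriv (if (j:ℕ) = m+1 then m+2 else (j:ℕ)) f x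
    else iteratedDeriv (if (j:ℕ) = m+1 then m+2 else (j:ℕ)) (u (k:ℕ)) x)

/-- numerator of `widderG n`. -/
noncomputable def Bn (n : ℕ) (u : ℕ → ℝ → ℝ) (x t : ℝ) : ℝ :=
  Matrix.det (Matrix.of fun j k : Fin (n+1) =>
    if (j:ℕ) = n then u (k:ℕ) x else iteratedDeriv (j:ℕ) (u (k:ℕ)) t)

/-- bumped version: derivative of `Bn (m+1) u x` in `t`. -/
noncomputable def Bnb (m : ℕ) (u : ℕ → ℝ → ℝ) (x t : ℝ) : ℝ :=
  Matrix.det (Matrix.of fun j k : Fin (m+2) =>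
    if (j:ℕ) = m then iteratedDeriv (m+1) (u (k:ℕ)) t
    else if (j:ℕ) = m+1 then u (k:ℕ) x else iteratedDeriv (j:ℕ) (u (k:ℕ)) t)

lemma J2 (m : ℕ) (u : ℕ → ℝ → ℝ) (x t : ℝ) :
    Bnb m u x t * wronskian m u t - Bn (m+1) u x t * Wb m u t
      + Bn m u x t * wronskian (m+1) u t = 0 := by
  classical
  have hP := plucker (fun (i : Fin m) (k : Fin (m+2)) => iteratedDeriv (i:ℕ) (u (k:ℕ)) t)
    (fun k => iteratedDeriv m (u (k:ℕ)) t)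
    (fun k => iteratedDeriv (m+1) (u (k:ℕ)) t)
    (fun k => u (k:ℕ) x)
    (fun k => if k = Fin.last (m+1) then (1:ℝ) else 0)
  have e1 : Dd (fun (i : Fin m) (k : Fin (m+2)) => iteratedDeriv (i:ℕ) (u (k:ℕ)) t)
      (fun k => iteratedDeriv (m+1) (u (k:ℕ)) t) (fun k => u (k:ℕ) x) = Bnb m u x t := by
    unfold Bnb
    refine Dd_congr _ _ _ _ ?_
    intro i k
    split_ifs <;> first | rfl | omega
  have e2 : Dd (fun (i : Fin m) (k : Fin (m+2)) => iteratedDeriv (i:ℕ) (u (k:ℕ)) t)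
      (fun k => iteratedDeriv m (u (k:ℕ)) t) (fun k => u (k:ℕ) x) = Bn (m+1) u x t := by
    unfold Bn
    refine Dd_congr _ _ _ _ ?_
    intro i k
    split_ifs <;> first | rfl | omega |
      exact congrArg (fun q => iteratedDeriv q (u (k:ℕ)) t) (by omega)
  have e3 : Dd (fun (i : Fin m) (k : Fin (m+2)) => iteratedDeriv (i:ℕ) (u (k:ℕ)) t)
      (fun k => iteratedDeriv m (u (k:ℕ)) t) (fun k => iteratedDeriv (m+1) (u (k:ℕ)) t)
      = wronskian (m+1) u t := by
    unfold wronskian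
    refine Dd_congr _ _ _ _ ?_
    intro i k
    split_ifs <;> first | rfl | omega |
      exact congrArg (fun q => iteratedDeriv q (u (k:ℕ)) t) (by omega)
  -- minors with the unit row
  have hpow : (-1:ℝ)^((m+1) + ((Fin.last (m+1)):ℕ)) = 1 :=
    Even.neg_one_pow ⟨m+1, by rw [Fin.val_last]⟩
  have e4 : Dd (fun (i : Fin m) (k : Fin (m+2)) => iteratedDeriv (i:ℕ) (u (k:ℕ)) t)
      (fun k => iteratedDeriv m (u (k:ℕ)) t)
      (fun k => if k = Fin.last (m+1) then (1:ℝ) else 0) = wronskian m u t := by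
    unfold Dd
    rw [det_snoc_unit, hpow, one_mul]
    unfold wronskian
    congr 1
    funext i j
    show (Fin.snoc (fun (i : Fin m) (k : Fin (m+2)) => iteratedDeriv (i:ℕ) (u (k:ℕ)) t)
        (fun k => iteratedDeriv m (u (k:ℕ)) t) : Fin (m+1) → Fin (m+2) → ℝ) i
        ((Fin.last (m+1)).succAbove j) = iteratedDeriv (i:ℕ) (u (j:ℕ)) t
    rw [show (Fin.last (m+1)).succAbove j = j.castSucc from congrFun Fin.succAbove_last j]
    rw [snoc1_apply]
    split_ifs with hi
    · show iteratedDeriv (i:ℕ) (u ((j.castSucc : Fin (m+2)):ℕ)) t = _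
      rw [Fin.coe_castSucc]
    · show iteratedDeriv m (u ((j.castSucc : Fin (m+2)):ℕ)) t = _
      rw [Fin.coe_castSucc, show (i:ℕ) = m by have := i.isLt; omega]
  have e5 : Dd (fun (i : Fin m) (k : Fin (m+2)) => iteratedDeriv (i:ℕ) (u (k:ℕ)) t)
      (fun k => iteratedDeriv (m+1) (u (k:ℕ)) t)
      (fun k => if k = Fin.last (m+1) then (1:ℝ) else 0) = Wb m u t := by
    unfold Dd
    rw [det_snoc_unit, hpow, one_mul]
    unfold Wb
    congr 1
    funext i j
    show (Fin.snoc (fun (i : Fin m) (k : Fin (m+2)) => iteratedDeriv (i:ℕ) (u (k:ℕ)) t)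
        (fun k => iteratedDeriv (m+1) (u (k:ℕ)) t) : Fin (m+1) → Fin (m+2) → ℝ) i
        ((Fin.last (m+1)).succAbove j)
        = if (i:ℕ) = m then iteratedDeriv (m+1) (u (j:ℕ)) t else iteratedDeriv (i:ℕ) (u (j:ℕ)) t
    rw [show (Fin.last (m+1)).succAbove j = j.castSucc from congrFun Fin.succAbove_last j]
    rw [snoc1_apply]
    split_ifs with hi h2
    · omega
    · show iteratedDeriv (i:ℕ) (u ((j.castSucc : Fin (m+2)):ℕ)) t = _
      rw [Fin.coe_castSucc]
    · show iteratedDeriv (m+1) (u ((j.castSucc : Fin (m+2)):ℕ)) t = _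
      rw [Fin.coe_castSucc]
    · omega
  have e6 : Dd (fun (i : Fin m) (k : Fin (m+2)) => iteratedDeriv (i:ℕ) (u (k:ℕ)) t)
      (fun k => u (k:ℕ) x)
      (fun k => if k = Fin.last (m+1) then (1:ℝ) else 0) = Bn m u x t := by
    unfold Dd
    rw [det_snoc_unit, hpow, one_mul]
    unfold Bn
    congr 1
    funext i j
    show (Fin.snoc (fun (i : Fin m) (k : Fin (m+2)) => iteratedDeriv (i:ℕ) (u (k:ℕ)) t)
        (fun k => u (k:ℕ) x) : Fin (m+1) → Fin (m+2) → ℝ) i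
        ((Fin.last (m+1)).succAbove j)
        = if (i:ℕ) = m then u (j:ℕ) x else iteratedDeriv (i:ℕ) (u (j:ℕ)) t
    rw [show (Fin.last (m+1)).succAbove j = j.castSucc from congrFun Fin.succAbove_last j]
    rw [snoc1_apply]
    split_ifs with hi h2
    · omega
    · show iteratedDeriv (i:ℕ) (u ((j.castSucc : Fin (m+2)):ℕ)) t = _
      rw [Fin.coe_castSucc]
    · show u ((j.castSucc : Fin (m+2)):ℕ) x = _
      rw [Fin.coe_castSucc]
    · omega
  rw [e1, e2, e3, e4, e5, e6] at hP
  linarith [hP]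


lemma J1 (m : ℕ) (u : ℕ → ℝ → ℝ) (f : ℝ → ℝ) (s : ℝ) :
    An (m+1) u f s * wronskian m u s
      = Anb m u f s * wronskian (m+1) u s - Wb (m+1) u s * An m u f s := by
  classical
  have hsa : ∀ j : Fin (m+2), ((((Fin.last (m+1)).castSucc : Fin (m+3)).succAbove j) : ℕ)
      = if (j:ℕ) < m+1 then (j:ℕ) else (j:ℕ)+1 := by
    intro j
    rcases lt_or_ge (j:ℕ) (m+1) with h | h
    · rw [if_pos h, Fin.succAbove_of_castSucc_lt _ _ (by
        rw [Fin.lt_def]; simpa using h), Fin.coe_castSucc]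
    · rw [if_neg (by omega), Fin.succAbove_of_le_castSucc _ _ (by
        rw [Fin.le_def]; simpa using h), Fin.val_succ]
  have hpow2 : (-1:ℝ)^((m+2) + ((Fin.last (m+2)):ℕ)) = 1 :=
    Even.neg_one_pow ⟨m+2, by rw [Fin.val_last]⟩
  have hpow1 : (-1:ℝ)^((m+1) + ((Fin.last (m+1)):ℕ)) = 1 :=
    Even.neg_one_pow ⟨m+1, by rw [Fin.val_last]⟩
  have hpowodd : (-1:ℝ)^((m+2) + (((Fin.last (m+1)).castSucc : Fin (m+3))):ℕ) = -1 :=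
    Odd.neg_one_pow ⟨m+1, by simp [Fin.coe_castSucc, Fin.val_last]; omega⟩
  have hP := plucker
    (fun (i : Fin (m+1)) (c : Fin (m+3)) =>
      if (c:ℕ) = m+2 then iteratedDeriv (i:ℕ) f s else iteratedDeriv (i:ℕ) (u (c:ℕ)) s)
    (fun c => if (c:ℕ) = m+2 then iteratedDeriv (m+1) f s else iteratedDeriv (m+1) (u (c:ℕ)) s)
    (fun c => if (c:ℕ) = m+2 then iteratedDeriv (m+2) f s else iteratedDeriv (m+2) (u (c:ℕ)) s)
    (fun c => if c = ((Fin.last (m+1)).castSucc : Fin (m+3)) then (1:ℝ) else 0)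
    (fun c => if c = Fin.last (m+2) then (1:ℝ) else 0)
  have e1 : Dd (fun (i : Fin (m+1)) (c : Fin (m+3)) =>
        if (c:ℕ) = m+2 then iteratedDeriv (i:ℕ) f s else iteratedDeriv (i:ℕ) (u (c:ℕ)) s)
      (fun c => if (c:ℕ) = m+2 then iteratedDeriv (m+1) f s else iteratedDeriv (m+1) (u (c:ℕ)) s)
      (fun c => if (c:ℕ) = m+2 then iteratedDeriv (m+2) f s else iteratedDeriv (m+2) (u (c:ℕ)) s)
      = An (m+1) u f s := by
    unfold An
    refine Dd_congr _ _ _ _ ?_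
    intro i k
    split_ifs <;>
      first
        | rfl
        | omega
        | exact congrArg (fun q => iteratedDeriv q f s) (by omega)
        | exact congrArg (fun q => iteratedDeriv q (u (k:ℕ)) s) (by omega)
  have e2 : Dd (fun (i : Fin (m+1)) (c : Fin (m+3)) =>
        if (c:ℕ) = m+2 then iteratedDeriv (i:ℕ) f s else iteratedDeriv (i:ℕ) (u (c:ℕ)) s)
      (fun c => if (c:ℕ) = m+2 then iteratedDeriv (m+1) f s else iteratedDeriv (m+1) (u (c:ℕ)) s)
      (fun c => if c = Fin.last (m+2) then (1:ℝ) else 0)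
      = wronskian (m+1) u s := by
    unfold Dd
    rw [det_snoc_unit, hpow2, one_mul]
    unfold wronskian
    congr 1
    funext i j
    have hj := j.isLt
    rw [Matrix.of_apply, Matrix.of_apply, congrFun Fin.succAbove_last j, snoc1_apply]
    simp only [dite_apply, Fin.coe_castSucc, Fin.val_mk]
    split_ifs <;>
      first
        | rfl
        | omega
        | exact congrArg (fun q => iteratedDeriv q f s) (by omega)
        | exact congrArg (fun q => iteratedDeriv q (u (j:ℕ)) s) (by omega)
        | exact congrArg₂ (fun q r => iteratedDeriv q (u r) s) (by omega) (by omega)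
  have e3 : Dd (fun (i : Fin (m+1)) (c : Fin (m+3)) =>
        if (c:ℕ) = m+2 then iteratedDeriv (i:ℕ) f s else iteratedDeriv (i:ℕ) (u (c:ℕ)) s)
      (fun c => if (c:ℕ) = m+2 then iteratedDeriv (m+2) f s else iteratedDeriv (m+2) (u (c:ℕ)) s)
      (fun c => if c = Fin.last (m+2) then (1:ℝ) else 0)
      = Wb (m+1) u s := by
    unfold Dd
    rw [det_snoc_unit, hpow2, one_mul]
    unfold Wb
    congr 1
    funext i j
    have hj := j.isLt
    rw [Matrix.of_apply, Matrix.of_apply, congrFun Fin.succAbove_last j, snoc1_apply]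
    simp only [dite_apply, Fin.coe_castSucc, Fin.val_mk]
    split_ifs <;>
      first
        | rfl
        | omega
        | exact congrArg (fun q => iteratedDeriv q f s) (by omega)
        | exact congrArg (fun q => iteratedDeriv q (u (j:ℕ)) s) (by omega)
        | exact congrArg₂ (fun q r => iteratedDeriv q (u r) s) (by omega) (by omega)
  have e4 : Dd (fun (i : Fin (m+1)) (c : Fin (m+3)) =>
        if (c:ℕ) = m+2 then iteratedDeriv (i:ℕ) f s else iteratedDeriv (i:ℕ) (u (c:ℕ)) s)
      (fun c => if (c:ℕ) = m+2 then iteratedDeriv (m+1) f s else iteratedDeriv (m+1) (u (c:ℕ)) s)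
      (fun c => if c = ((Fin.last (m+1)).castSucc : Fin (m+3)) then (1:ℝ) else 0)
      = -(An m u f s) := by
    unfold Dd
    rw [det_snoc_unit, hpowodd, neg_one_mul, neg_inj]
    unfold An
    congr 1
    funext i j
    have hj := j.isLt
    rw [Matrix.of_apply, Matrix.of_apply, snoc1_apply]
    simp only [dite_apply, Fin.val_mk, hsa j]
    split_ifs <;>
      first
        | rfl
        | omega
        | exact congrArg (fun q => iteratedDeriv q f s) (by omega)
        | exact congrArg (fun q => iteratedDeriv q (u (j:ℕ)) s) (by omega)
        | exact congrArg₂ (fun q r => iteratedDeriv q (u r) s) (by omega) (by omega)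
  have e5 : Dd (fun (i : Fin (m+1)) (c : Fin (m+3)) =>
        if (c:ℕ) = m+2 then iteratedDeriv (i:ℕ) f s else iteratedDeriv (i:ℕ) (u (c:ℕ)) s)
      (fun c => if (c:ℕ) = m+2 then iteratedDeriv (m+2) f s else iteratedDeriv (m+2) (u (c:ℕ)) s)
      (fun c => if c = ((Fin.last (m+1)).castSucc : Fin (m+3)) then (1:ℝ) else 0)
      = -(Anb m u f s) := by
    unfold Dd
    rw [det_snoc_unit, hpowodd, neg_one_mul, neg_inj]
    unfold Anb
    congr 1
    funext i j
    have hj := j.isLt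
    rw [Matrix.of_apply, Matrix.of_apply, snoc1_apply]
    simp only [dite_apply, Fin.val_mk, hsa j]
    split_ifs <;>
      first
        | rfl
        | omega
        | exact congrArg (fun q => iteratedDeriv q f s) (by omega)
        | exact congrArg (fun q => iteratedDeriv q (u (j:ℕ)) s) (by omega)
        | exact congrArg₂ (fun q r => iteratedDeriv q (u r) s) (by omega) (by omega)
  have e6 : Dd (fun (i : Fin (m+1)) (c : Fin (m+3)) =>
        if (c:ℕ) = m+2 then iteratedDeriv (i:ℕ) f s else iteratedDeriv (i:ℕ) (u (c:ℕ)) s)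
      (fun c => if c = ((Fin.last (m+1)).castSucc : Fin (m+3)) then (1:ℝ) else 0)
      (fun c => if c = Fin.last (m+2) then (1:ℝ) else 0)
      = wronskian m u s := by
    unfold Dd
    rw [det_snoc_unit, hpow2, one_mul]
    have hrows : (Matrix.of fun (i : Fin (m+2)) (j : Fin (m+2)) =>
        (Fin.snoc (fun (i : Fin (m+1)) (c : Fin (m+3)) =>
          if (c:ℕ) = m+2 then iteratedDeriv (i:ℕ) f s else iteratedDeriv (i:ℕ) (u (c:ℕ)) s)
          (fun c => if c = ((Fin.last (m+1)).castSucc : Fin (m+3)) then (1:ℝ) else 0) :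
            Fin (m+2) → Fin (m+3) → ℝ) i ((Fin.last (m+2)).succAbove j))
        = Matrix.of (Fin.snoc (fun (i : Fin (m+1)) (j : Fin (m+2)) =>
            if ((j.castSucc : Fin (m+3)):ℕ) = m+2 then iteratedDeriv (i:ℕ) f s
            else iteratedDeriv (i:ℕ) (u ((j.castSucc : Fin (m+3)):ℕ)) s)
          (fun j : Fin (m+2) => if j = Fin.last (m+1) then (1:ℝ) else 0) :
            Fin (m+2) → Fin (m+2) → ℝ) := by
      funext i j
      rw [Matrix.of_apply, Matrix.of_apply]
      rw [congrFun Fin.succAbove_last j, snoc1_apply, snoc1_apply]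
      by_cases h : (i:ℕ) < m+1
      · rw [dif_pos h, dif_pos h]
      · rw [dif_neg h, dif_neg h]
        simp only [Fin.castSucc_inj]
    rw [hrows, det_snoc_unit, hpow1, one_mul]
    unfold wronskian
    congr 1
    funext i j
    have hj := j.isLt
    rw [Matrix.of_apply, Matrix.of_apply, congrFun Fin.succAbove_last j]
    have hcc : (((j.castSucc.castSucc : Fin (m+3))):ℕ) = (j:ℕ) := by
      rw [Fin.coe_castSucc, Fin.coe_castSucc]
    rw [hcc, if_neg (by omega)]
  rw [e1, e2, e3, e4, e5, e6] at hP
  linear_combination hP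

lemma hasDerivAt_wronskian (n : ℕ) (u : ℕ → ℝ → ℝ) (s : ℝ)
    (hu : ∀ k j : ℕ, k ≤ n → j ≤ n →
      HasDerivAt (iteratedDeriv j (u k)) (iteratedDeriv (j+1) (u k) s) s) :
    HasDerivAt (wronskian n u) (Wb n u s) s := by
  have h := my_hasDerivAt_det
    (fun t => Matrix.of fun (j k : Fin (n+1)) => iteratedDeriv (j:ℕ) (u (k:ℕ)) t)
    (Matrix.of fun (j k : Fin (n+1)) => iteratedDeriv ((j:ℕ)+1) (u (k:ℕ)) s) s
    (fun i j => by
      have hi := i.isLt; have hj := j.isLt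
      exact hu (j:ℕ) (i:ℕ) (by omega) (by omega))
  have hsum : ∑ r : Fin (n+1),
      ((Matrix.of fun (j k : Fin (n+1)) => iteratedDeriv (j:ℕ) (u (k:ℕ)) s).updateRow r
        ((Matrix.of fun (j k : Fin (n+1)) => iteratedDeriv ((j:ℕ)+1) (u (k:ℕ)) s) r)).det
      = Wb n u s := by
    rw [Finset.sum_eq_single (Fin.last n)]
    · unfold Wb
      congr 1
      funext i k
      rw [Matrix.updateRow_apply]
      by_cases hi : i = Fin.last n
      · rw [if_pos hi, Matrix.of_apply, Matrix.of_apply,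
          if_pos (show (i:ℕ) = n by rw [hi, Fin.val_last])]
        exact congrArg (fun q => iteratedDeriv q (u (k:ℕ)) s) (by rw [Fin.val_last])
      · rw [if_neg hi, Matrix.of_apply, Matrix.of_apply,
          if_neg (fun hh => hi (Fin.ext (by rw [hh, Fin.val_last])))]
    · intro r _ hr
      have hrlt : (r:ℕ) < n := by
        have := r.isLt
        have : (r:ℕ) ≠ n := fun hh => hr (Fin.ext (by rw [hh, Fin.val_last]))
        omega
      apply Matrix.det_zero_of_row_eq (i := r) (j := ⟨(r:ℕ)+1, by omega⟩)
      · intro hh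
        have := congrArg Fin.val hh
        simp only [Fin.val_mk] at this
        omega
      · funext k
        rw [Matrix.updateRow_self, Matrix.updateRow_ne (by
            intro hh
            have := congrArg Fin.val hh
            simp only [Fin.val_mk] at this
            omega)]
        rfl
    · intro hh
      exact absurd (Finset.mem_univ _) hh
  rw [← hsum]
  exact h

lemma hasDerivAt_An (m : ℕ) (u : ℕ → ℝ → ℝ) (f : ℝ → ℝ) (s : ℝ)
    (hu : ∀ k j : ℕ, k ≤ m → j ≤ m+1 →
      HasDerivAt (iteratedDeriv j (u k)) (iteratedDeriv (j+1) (u k) s) s)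
    (hf : ∀ j : ℕ, j ≤ m+1 → HasDerivAt (iteratedDeriv j f) (iteratedDeriv (j+1) f s) s) :
    HasDerivAt (An m u f) (Anb m u f s) s := by
  have h := my_hasDerivAt_det
    (fun t => Matrix.of fun (j k : Fin (m+2)) =>
      if (k:ℕ) = m+1 then iteratedDeriv (j:ℕ) f t else iteratedDeriv (j:ℕ) (u (k:ℕ)) t)
    (Matrix.of fun (j k : Fin (m+2)) =>
      if (k:ℕ) = m+1 then iteratedDeriv ((j:ℕ)+1) f s else iteratedDeriv ((j:ℕ)+1) (u (k:ℕ)) s) s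
    (fun i j => by
      have hi := i.isLt; have hj := j.isLt
      rw [Matrix.of_apply]
      by_cases hcol : (j:ℕ) = m+1
      · simp only [Matrix.of_apply, hcol, if_pos rfl, if_true]
        simpa [hcol] using hf (i:ℕ) (by omega)
      · simp only [Matrix.of_apply, hcol, if_false]
        simpa [hcol] using hu (j:ℕ) (i:ℕ) (by omega) (by omega))
  have hsum : ∑ r : Fin (m+2),
      ((Matrix.of fun (j k : Fin (m+2)) =>
        if (k:ℕ) = m+1 then iteratedDeriv (j:ℕ) f s else iteratedDeriv (j:ℕ) (u (k:ℕ)) s).updateRow r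
        ((Matrix.of fun (j k : Fin (m+2)) =>
          if (k:ℕ) = m+1 then iteratedDeriv ((j:ℕ)+1) f s
          else iteratedDeriv ((j:ℕ)+1) (u (k:ℕ)) s) r)).det
      = Anb m u f s := by
    rw [Finset.sum_eq_single (Fin.last (m+1))]
    · unfold Anb
      congr 1
      funext i k
      rw [Matrix.updateRow_apply]
      by_cases hi : i = Fin.last (m+1)
      · rw [if_pos hi, Matrix.of_apply, Matrix.of_apply]
        have hv : (i:ℕ) = m+1 := by rw [hi, Fin.val_last]
        by_cases hcol : (k:ℕ) = m+1
        · rw [if_pos hcol, if_pos hcol, if_pos hv]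
          exact congrArg (fun q => iteratedDeriv q f s) (by
            rw [show ((Fin.last (m+1)):ℕ) = m+1 from Fin.val_last _])
        · rw [if_neg hcol, if_neg hcol, if_pos hv]
          exact congrArg (fun q => iteratedDeriv q (u (k:ℕ)) s) (by
            rw [show ((Fin.last (m+1)):ℕ) = m+1 from Fin.val_last _])
      · have hv : (i:ℕ) ≠ m+1 := fun hh => hi (Fin.ext (by rw [hh, Fin.val_last]))
        rw [if_neg hi, Matrix.of_apply, Matrix.of_apply]
        by_cases hcol : (k:ℕ) = m+1
        · rw [if_pos hcol, if_pos hcol, if_neg hv]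
        · rw [if_neg hcol, if_neg hcol, if_neg hv]
    · intro r _ hr
      have hrlt : (r:ℕ) < m+1 := by
        have := r.isLt
        have : (r:ℕ) ≠ m+1 := fun hh => hr (Fin.ext (by rw [hh, Fin.val_last]))
        omega
      apply Matrix.det_zero_of_row_eq (i := r) (j := ⟨(r:ℕ)+1, by omega⟩)
      · intro hh
        have := congrArg Fin.val hh
        simp only [Fin.val_mk] at this
        omega
      · funext k
        rw [Matrix.updateRow_self, Matrix.updateRow_ne (by
            intro hh
            have := congrArg Fin.val hh
            simp only [Fin.val_mk] at this
            omega)]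
        rfl
    · intro hh
      exact absurd (Finset.mem_univ _) hh
  rw [← hsum]
  exact h

lemma hasDerivAt_Bn (m : ℕ) (u : ℕ → ℝ → ℝ) (x s : ℝ)
    (hu : ∀ k j : ℕ, k ≤ m+1 → j ≤ m →
      HasDerivAt (iteratedDeriv j (u k)) (iteratedDeriv (j+1) (u k) s) s) :
    HasDerivAt (fun t => Bn (m+1) u x t) (Bnb m u x s) s := by
  have h := my_hasDerivAt_det
    (fun t => Matrix.of fun (j k : Fin (m+2)) =>
      if (j:ℕ) = m+1 then u (k:ℕ) x else iteratedDeriv (j:ℕ) (u (k:ℕ)) t)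
    (Matrix.of fun (j k : Fin (m+2)) =>
      if (j:ℕ) = m+1 then 0 else iteratedDeriv ((j:ℕ)+1) (u (k:ℕ)) s) s
    (fun i j => by
      have hi := i.isLt; have hj := j.isLt
      by_cases hrow : (i:ℕ) = m+1
      · simp only [Matrix.of_apply, hrow, if_pos rfl, if_true]
        exact hasDerivAt_const s _
      · simp only [Matrix.of_apply, hrow, if_false]
        exact hu (j:ℕ) (i:ℕ) (by omega) (by omega))
  have hsum : ∑ r : Fin (m+2),
      ((Matrix.of fun (j k : Fin (m+2)) =>
        if (j:ℕ) = m+1 then u (k:ℕ) x else iteratedDeriv (j:ℕ) (u (k:ℕ)) s).updateRow r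
        ((Matrix.of fun (j k : Fin (m+2)) =>
          if (j:ℕ) = m+1 then 0 else iteratedDeriv ((j:ℕ)+1) (u (k:ℕ)) s) r)).det
      = Bnb m u x s := by
    rw [Finset.sum_eq_single (⟨m, by omega⟩ : Fin (m+2))]
    · unfold Bnb
      congr 1
      funext i k
      rw [Matrix.updateRow_apply]
      by_cases hi : i = (⟨m, by omega⟩ : Fin (m+2))
      · have hv : (i:ℕ) = m := by rw [hi]
        rw [if_pos hi, Matrix.of_apply, Matrix.of_apply,
          if_neg (show ¬((⟨m, by omega⟩ : Fin (m+2)):ℕ) = m+1 by simp), if_pos hv]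
      · have hv : (i:ℕ) ≠ m := fun hh => hi (Fin.ext (by rw [hh]))
        rw [if_neg hi, Matrix.of_apply, Matrix.of_apply, if_neg hv]
    · intro r _ hr
      by_cases hlast : (r:ℕ) = m+1
      · apply Matrix.det_eq_zero_of_row_eq_zero r
        intro k
        rw [Matrix.updateRow_self, Matrix.of_apply, if_pos hlast]
      · have hrlt : (r:ℕ) < m := by
          have := r.isLt
          have : (r:ℕ) ≠ m := fun hh => hr (Fin.ext (by rw [hh]))
          omega
        apply Matrix.det_zero_of_row_eq (i := r) (j := ⟨(r:ℕ)+1, by omega⟩)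
        · intro hh
          have := congrArg Fin.val hh
          simp only [Fin.val_mk] at this
          omega
        · funext k
          rw [Matrix.updateRow_self, Matrix.updateRow_ne (by
              intro hh
              have := congrArg Fin.val hh
              simp only [Fin.val_mk] at this
              omega)]
          rw [Matrix.of_apply, Matrix.of_apply, if_neg (by omega), if_neg (by
            simp only [Fin.val_mk]; omega)]
    · intro hh
      exact absurd (Finset.mem_univ _) hh
  rw [← hsum]
  exact h

lemma hasDerivAt_iteratedDeriv' {g : ℝ → ℝ} {M : ℕ} (hg : ContDiff ℝ (M : ℕ) g) {j : ℕ}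
    (hj : j < M) (s : ℝ) :
    HasDerivAt (iteratedDeriv j g) (iteratedDeriv (j+1) g s) s := by
  have hd : Differentiable ℝ (iteratedDeriv j g) :=
    hg.differentiable_iteratedDeriv j (by exact_mod_cast hj)
  have h2 := (hd s).hasDerivAt
  rwa [iteratedDeriv_succ]

lemma continuous_iteratedDeriv' {g : ℝ → ℝ} {M : ℕ} (hg : ContDiff ℝ (M : ℕ) g) {j : ℕ}
    (hj : j ≤ M) : Continuous (iteratedDeriv j g) :=
  hg.continuous_iteratedDeriv j (by exact_mod_cast hj)

lemma continuous_wronskian (n : ℕ) (u : ℕ → ℝ → ℝ)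
    (hu : ∀ k j : ℕ, k ≤ n → j ≤ n → Continuous (iteratedDeriv j (u k))) :
    Continuous (wronskian n u) := by
  apply Continuous.matrix_det
  apply continuous_matrix
  intro i j
  have hi := i.isLt; have hj := j.isLt
  exact hu (j:ℕ) (i:ℕ) (by omega) (by omega)

lemma continuous_An (m : ℕ) (u : ℕ → ℝ → ℝ) (f : ℝ → ℝ)
    (hu : ∀ k j : ℕ, k ≤ m → j ≤ m+1 → Continuous (iteratedDeriv j (u k)))
    (hf : ∀ j : ℕ, j ≤ m+1 → Continuous (iteratedDeriv j f)) :
    Continuous (An m u f) := by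
  apply Continuous.matrix_det
  apply continuous_matrix
  intro i j
  have hi := i.isLt; have hj := j.isLt
  by_cases hc : (j:ℕ) = m+1
  · simp only [Matrix.of_apply, hc, if_pos rfl, if_true]
    exact hf (i:ℕ) (by omega)
  · simp only [Matrix.of_apply, hc, if_false]
    exact hu (j:ℕ) (i:ℕ) (by omega) (by omega)

lemma continuous_Bn (n : ℕ) (u : ℕ → ℝ → ℝ) (x : ℝ)
    (hu : ∀ k j : ℕ, k ≤ n → j ≤ n → Continuous (iteratedDeriv j (u k))) :
    Continuous (fun t => Bn n u x t) := by
  apply Continuous.matrix_det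
  apply continuous_matrix
  intro i j
  have hi := i.isLt; have hj := j.isLt
  by_cases hc : (i:ℕ) = n
  · simp only [Matrix.of_apply, hc, if_pos rfl, if_true]
    exact continuous_const
  · simp only [Matrix.of_apply, hc, if_false]
    exact hu (j:ℕ) (i:ℕ) (by omega) (by omega)

lemma widderL_succ_eq (m : ℕ) (u : ℕ → ℝ → ℝ) (f : ℝ → ℝ) (t : ℝ) :
    widderL (m+1) u f t = An m u f t / wronskian m u t := rfl

lemma widderG_succ_eq (m : ℕ) (u : ℕ → ℝ → ℝ) (x t : ℝ) :
    widderG (m+1) u x t = Bn (m+1) u x t / wronskian (m+1) u t := rfl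

lemma wronskian_zero_eq (u : ℕ → ℝ → ℝ) (t : ℝ) : wronskian 0 u t = u 0 t := by
  unfold wronskian
  rw [Matrix.det_fin_one]
  rfl

lemma widderG_eq (n : ℕ) (u : ℕ → ℝ → ℝ) (x t : ℝ) :
    widderG n u x t = Bn n u x t / wronskian n u t := by
  cases n with
  | zero =>
    show u 0 x / u 0 t = _
    rw [wronskian_zero_eq]
    unfold Bn
    rw [Matrix.det_fin_one]
    rfl
  | succ m => rfl

lemma Bn_self (m : ℕ) (u : ℕ → ℝ → ℝ) (x : ℝ) : Bn (m+1) u x x = 0 := by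
  unfold Bn
  apply Matrix.det_zero_of_row_eq (i := (0 : Fin (m+2))) (j := Fin.last (m+1))
  · intro hh
    have := congrArg Fin.val hh
    simp only [Fin.val_zero, Fin.val_last] at this
    omega
  · funext k
    rw [Matrix.of_apply, Matrix.of_apply,
      if_neg (by simp only [Fin.val_zero]; omega), if_pos (Fin.val_last _)]
    simp [Fin.val_zero, iteratedDeriv_zero]

lemma widderG_self (m : ℕ) (u : ℕ → ℝ → ℝ) (x : ℝ) : widderG (m+1) u x x = 0 := by
  rw [widderG_succ_eq, Bn_self, zero_div]

lemma widder_step (a b : ℝ) (m : ℕ) (f : ℝ → ℝ) (u : ℕ → ℝ → ℝ)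
    (hf : ContDiff ℝ ((m+2 : ℕ)) f) (hu : ∀ i, i ≤ m+1 → ContDiff ℝ ((m+2 : ℕ)) (u i))
    (hW : ∀ i, i ≤ m+1 → ∀ y ∈ Set.Icc a b, 0 < wronskian i u y)
    (x t : ℝ) (hx : x ∈ Set.Icc a b) (ht : t ∈ Set.Icc a b) :
    ∫ s in t..x, widderG m u x s * widderL (m+1) u f s
      = widderL (m+1) u f t * widderG (m+1) u x t
        + ∫ s in t..x, widderG (m+1) u x s * widderL (m+2) u f s := by
  have hsub : Set.uIcc t x ⊆ Set.Icc a b := Set.uIcc_subset_Icc ht hx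
  have hud : ∀ (k j : ℕ), k ≤ m+1 → j ≤ m+1 → ∀ s : ℝ,
      HasDerivAt (iteratedDeriv j (u k)) (iteratedDeriv (j+1) (u k) s) s :=
    fun k j hk hj s => hasDerivAt_iteratedDeriv' (hu k hk) (by omega) s
  have hfd : ∀ j : ℕ, j ≤ m+1 → ∀ s : ℝ,
      HasDerivAt (iteratedDeriv j f) (iteratedDeriv (j+1) f s) s :=
    fun j hj s => hasDerivAt_iteratedDeriv' hf (by omega) s
  have huc : ∀ (k j : ℕ), k ≤ m+1 → j ≤ m+2 → Continuous (iteratedDeriv j (u k)) :=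
    fun k j hk hj => continuous_iteratedDeriv' (hu k hk) hj
  have hfc : ∀ j : ℕ, j ≤ m+2 → Continuous (iteratedDeriv j f) :=
    fun j hj => continuous_iteratedDeriv' hf hj
  have hL2eq : ∀ s : ℝ, widderL (m+2) u f s = An (m+1) u f s / wronskian (m+1) u s :=
    fun s => widderL_succ_eq (m+1) u f s
  have hΨ : ∀ s ∈ Set.uIcc t x,
      HasDerivAt (fun τ => widderL (m+1) u f τ * widderG (m+1) u x τ)
        (widderG (m+1) u x s * widderL (m+2) u f s
          - widderG m u x s * widderL (m+1) u f s) s := by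
    intro s hs
    have hsI := hsub hs
    have hWm : wronskian m u s ≠ 0 := ne_of_gt (hW m (by omega) s hsI)
    have hWm1 : wronskian (m+1) u s ≠ 0 := ne_of_gt (hW (m+1) le_rfl s hsI)
    have hA : HasDerivAt (An m u f) (Anb m u f s) s :=
      hasDerivAt_An m u f s (fun k j hk hj => hud k j (by omega) hj s) (fun j hj => hfd j hj s)
    have hWd : HasDerivAt (wronskian m u) (Wb m u s) s :=
      hasDerivAt_wronskian m u s (fun k j hk hj => hud k j (by omega) (by omega) s)
    have hWd1 : HasDerivAt (wronskian (m+1) u) (Wb (m+1) u s) s :=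
      hasDerivAt_wronskian (m+1) u s (fun k j hk hj => hud k j hk hj s)
    have hB : HasDerivAt (fun τ => Bn (m+1) u x τ) (Bnb m u x s) s :=
      hasDerivAt_Bn m u x s (fun k j hk hj => hud k j hk (by omega) s)
    have hL : HasDerivAt (fun τ => widderL (m+1) u f τ)
        ((Anb m u f s * wronskian m u s - An m u f s * Wb m u s) / (wronskian m u s)^2) s :=
      hA.div hWd hWm
    have hG : HasDerivAt (fun τ => widderG (m+1) u x τ)
        ((Bnb m u x s * wronskian (m+1) u s - Bn (m+1) u x s * Wb (m+1) u s)
          / (wronskian (m+1) u s)^2) s :=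
      hB.div hWd1 hWm1
    have hmul := hL.fun_mul hG
    have key : ∀ (A1 A2 A3 W1 W2 B1 B2 B3 p q : ℝ), p ≠ 0 → q ≠ 0 →
        A1 * p = A2 * q - W2 * A3 →
        B1 * p - B2 * W1 + B3 * q = 0 →
        B2/q * (A1/q) - B3/p * (A3/p)
          = (A2*p - A3*W1)/p^2 * (B2/q) + (A3/p) * ((B1*q - B2*W2)/q^2) := by
      intro A1 A2 A3 W1 W2 B1 B2 B3 p q hp hq h1 h2
      field_simp
      linear_combination (B2*p) * h1 - (q*A3) * h2
    refine hmul.congr_deriv (Eq.symm ?_)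
    rw [hL2eq s, widderG_succ_eq m u x s, widderG_eq m u x s,
      widderL_succ_eq m u f s]
    exact key (An (m+1) u f s) (Anb m u f s) (An m u f s) (Wb m u s) (Wb (m+1) u s)
      (Bnb m u x s) (Bn (m+1) u x s) (Bn m u x s) (wronskian m u s) (wronskian (m+1) u s)
      hWm hWm1 (J1 m u f s) (J2 m u x s)
  have hcWm : Continuous (wronskian m u) :=
    continuous_wronskian m u (fun k j hk hj => huc k j (by omega) (by omega))
  have hcWm1 : Continuous (wronskian (m+1) u) :=
    continuous_wronskian (m+1) u (fun k j hk hj => huc k j hk (by omega))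
  have hcAn : Continuous (An m u f) :=
    continuous_An m u f (fun k j hk hj => huc k j (by omega) (by omega))
      (fun j hj => hfc j (by omega))
  have hcAn1 : Continuous (An (m+1) u f) :=
    continuous_An (m+1) u f (fun k j hk hj => huc k j hk hj) (fun j hj => hfc j hj)
  have hcBm : Continuous (fun τ => Bn m u x τ) :=
    continuous_Bn m u x (fun k j hk hj => huc k j (by omega) (by omega))
  have hcB1 : Continuous (fun τ => Bn (m+1) u x τ) :=
    continuous_Bn (m+1) u x (fun k j hk hj => huc k j hk (by omega))
  have hWne : ∀ s ∈ Set.uIcc t x, wronskian m u s ≠ 0 :=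
    fun s hs => ne_of_gt (hW m (by omega) s (hsub hs))
  have hWne1 : ∀ s ∈ Set.uIcc t x, wronskian (m+1) u s ≠ 0 :=
    fun s hs => ne_of_gt (hW (m+1) le_rfl s (hsub hs))
  have hint1 : IntervalIntegrable (fun s => widderG m u x s * widderL (m+1) u f s)
      MeasureTheory.volume t x := by
    apply ContinuousOn.intervalIntegrable
    refine ContinuousOn.congr (f := fun s =>
      (Bn m u x s / wronskian m u s) * (An m u f s / wronskian m u s)) ?_ ?_
    · exact (hcBm.continuousOn.div hcWm.continuousOn hWne).mul
        (hcAn.continuousOn.div hcWm.continuousOn hWne)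
    · intro s _
      simp only [widderG_eq, widderL_succ_eq]
  have hint2 : IntervalIntegrable (fun s => widderG (m+1) u x s * widderL (m+2) u f s)
      MeasureTheory.volume t x := by
    apply ContinuousOn.intervalIntegrable
    refine ContinuousOn.congr (f := fun s =>
      (Bn (m+1) u x s / wronskian (m+1) u s) * (An (m+1) u f s / wronskian (m+1) u s)) ?_ ?_
    · exact (hcB1.continuousOn.div hcWm1.continuousOn hWne1).mul
        (hcAn1.continuousOn.div hcWm1.continuousOn hWne1)
    · intro s _
      simp only [widderG_succ_eq, hL2eq]
  have hFTC := intervalIntegral.integral_eq_sub_of_hasDerivAt hΨ (hint2.sub hint1)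
  rw [intervalIntegral.integral_sub hint2 hint1] at hFTC
  rw [widderG_self, mul_zero] at hFTC
  linarith [hFTC]

lemma An_zero (u : ℕ → ℝ → ℝ) (f : ℝ → ℝ) (s : ℝ) :
    An 0 u f s = u 0 s * deriv f s - f s * deriv (u 0) s := by
  unfold An
  rw [Matrix.det_fin_two]
  simp [Matrix.of_apply, Fin.val_zero, Fin.val_one, iteratedDeriv_zero, iteratedDeriv_one]

lemma widder_main (a b : ℝ) (n : ℕ) (f : ℝ → ℝ) (u : ℕ → ℝ → ℝ) (x t : ℝ)
    (hx : x ∈ Set.Icc a b) (ht : t ∈ Set.Icc a b) :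
    ∀ (_ : ContDiff ℝ ((n+1 : ℕ)) f) (_ : ∀ i, i ≤ n → ContDiff ℝ ((n+1 : ℕ)) (u i))
      (_ : ∀ i, i ≤ n → ∀ y ∈ Set.Icc a b, 0 < wronskian i u y),
    f x = f t * (u 0 x / u 0 t)
        + ∑ i ∈ Finset.Icc 1 n, widderL i u f t * widderG i u x t
        + ∫ s in t..x, widderG n u x s * widderL (n+1) u f s := by
  induction n with
  | zero =>
    intro hf hu hW
    rw [Finset.Icc_eq_empty (by omega), Finset.sum_empty, add_zero]
    have hsub : Set.uIcc t x ⊆ Set.Icc a b := Set.uIcc_subset_Icc ht hx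
    have hu0 : ContDiff ℝ ((1:ℕ)) (u 0) := hu 0 le_rfl
    have hpos : ∀ y ∈ Set.Icc a b, 0 < u 0 y := fun y hy => by
      have := hW 0 le_rfl y hy
      rwa [wronskian_zero_eq] at this
    have hux : u 0 x ≠ 0 := ne_of_gt (hpos x hx)
    have hut : u 0 t ≠ 0 := ne_of_gt (hpos t ht)
    have hdf : ∀ s : ℝ, HasDerivAt f (deriv f s) s := fun s => by
      have := hasDerivAt_iteratedDeriv' (g := f) hf (by omega : 0 < 1) s
      simpa [iteratedDeriv_zero, iteratedDeriv_one] using this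
    have hdu : ∀ s : ℝ, HasDerivAt (u 0) (deriv (u 0) s) s := fun s => by
      have := hasDerivAt_iteratedDeriv' (g := u 0) hu0 (by omega : 0 < 1) s
      simpa [iteratedDeriv_zero, iteratedDeriv_one] using this
    have hd : ∀ s ∈ Set.uIcc t x,
        HasDerivAt (fun τ => f τ / u 0 τ) (An 0 u f s / (u 0 s)^2) s := by
      intro s hs
      have hne : u 0 s ≠ 0 := ne_of_gt (hpos s (hsub hs))
      have h := (hdf s).div (hdu s) hne
      refine h.congr_deriv (Eq.symm ?_)
      rw [An_zero]
      ring
    have hcf : Continuous (deriv f) := by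
      have := continuous_iteratedDeriv' (g := f) hf (le_rfl : 1 ≤ 1)
      rwa [iteratedDeriv_one] at this
    have hcu : Continuous (deriv (u 0)) := by
      have := continuous_iteratedDeriv' (g := u 0) hu0 (le_rfl : 1 ≤ 1)
      rwa [iteratedDeriv_one] at this
    have hne' : ∀ s ∈ Set.uIcc t x, (u 0 s)^2 ≠ 0 :=
      fun s hs => pow_ne_zero _ (ne_of_gt (hpos s (hsub hs)))
    have hint : IntervalIntegrable (fun s => An 0 u f s / (u 0 s)^2)
        MeasureTheory.volume t x := by
      apply ContinuousOn.intervalIntegrable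
      apply ContinuousOn.div
      · apply Continuous.continuousOn
        have heq : An 0 u f = fun s => u 0 s * deriv f s - f s * deriv (u 0) s :=
          funext fun s => An_zero u f s
        rw [heq]
        exact (hu0.continuous.mul hcf).sub ((hf.continuous).mul hcu)
      · exact ((hu0.continuous.pow 2).continuousOn)
      · exact hne'
    have hFTC := intervalIntegral.integral_eq_sub_of_hasDerivAt hd hint
    have hIeq : ∫ s in t..x, widderG 0 u x s * widderL 1 u f s
        = u 0 x * ∫ s in t..x, An 0 u f s / (u 0 s)^2 := by
      rw [← intervalIntegral.integral_const_mul]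
      apply intervalIntegral.integral_congr
      intro s _
      show widderG 0 u x s * widderL 1 u f s = u 0 x * (An 0 u f s / (u 0 s)^2)
      rw [show widderG 0 u x s = u 0 x / u 0 s from rfl,
        widderL_succ_eq 0 u f s, wronskian_zero_eq]
      ring
    rw [hIeq, hFTC]
    field_simp
    ring
  | succ m ih =>
    intro hf hu hW
    have hfm : ContDiff ℝ ((m+1 : ℕ)) f := hf.of_le (by exact_mod_cast Nat.le_succ (m+1))
    have hum : ∀ i, i ≤ m → ContDiff ℝ ((m+1 : ℕ)) (u i) :=
      fun i hi => (hu i (by omega)).of_le (by exact_mod_cast Nat.le_succ (m+1))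
    have hWm : ∀ i, i ≤ m → ∀ y ∈ Set.Icc a b, 0 < wronskian i u y :=
      fun i hi y hy => hW i (by omega) y hy
    have ihm := ih hfm hum hWm
    rw [ihm, widder_step a b m f u hf hu hW x t hx ht,
      Finset.sum_Icc_succ_top (by omega : 1 ≤ m+1)]
    ring

end WidderAux

/-- Widder–Taylor formula. -/
theorem widder_taylor (a b : ℝ) (hab : a ≤ b) (n : ℕ) (f : ℝ → ℝ) (u : ℕ → ℝ → ℝ)
    (hf : ContDiff ℝ (n + 1) f) (hu : ∀ i ≤ n, ContDiff ℝ (n + 1) (u i))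
    (hW : ∀ i ≤ n, ∀ x ∈ Set.Icc a b, 0 < wronskian i u x)
    (x t : ℝ) (hx : x ∈ Set.Icc a b) (ht : t ∈ Set.Icc a b) :
    f x = f t * (u 0 x / u 0 t)
        + ∑ i ∈ Finset.Icc 1 n, widderL i u f t * widderG i u x t
        + ∫ s in t..x, widderG n u x s * widderL (n + 1) u f s := by
  have hf' : ContDiff ℝ ((n+1 : ℕ)) f := by exact_mod_cast hf
  have hu' : ∀ i, i ≤ n → ContDiff ℝ ((n+1 : ℕ)) (u i) := fun i hi => by
    exact_mod_cast hu i hi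
  exact WidderAux.widder_main a b n f u x t hx ht hf' hu'
    (fun i hi y hy => hW i hi y hy)
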